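/- Let G be a Monge DAG on {s,...,N}, (m,n) a lattice point (n ∈ [s+1,N], 1 ≤ m ≤ n-s), and (v_0,...,v_m) a shortest m-link s-n path. Define Λ(k,j) = [δ(k-1,j), δ(k,j)] where δ(k,j) = f(k+1,j) - f(k,j) (infinite endpoints excluded). Then Λ(1,v_1) ⊇ Λ(2,v_2) ⊇ ... ⊇ Λ(m,v_m); that is, for each 1 ≤ i < m, every λ ∈ Λ(i+1,v_{i+1}) lies in Λ(i,v_i). -/

import Mathlib

/-- A Monge (submodular) edge-length function on the complete DAG on `{s,...,N}`. -/
def IsMonge (s N : ℕ) (c : ℕ → ℕ → ℝ) : Prop :=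
  ∀ i₁ i₂ j₂ j₁ : ℕ, s ≤ i₁ → i₁ < i₂ → i₂ < j₂ → j₂ < j₁ → j₁ ≤ N →
    c i₁ j₂ + c i₂ j₁ ≤ c i₁ j₁ + c i₂ j₂

/-- `v 0, v 1, ..., v m` is an `m`-link path from `a` to `b` inside `{s,...,N}`. -/
def IsPath (s N a b m : ℕ) (v : ℕ → ℕ) : Prop :=
  v 0 = a ∧ v m = b ∧ (∀ k < m, v k < v (k + 1)) ∧ s ≤ a ∧ b ≤ N

/-- The length of the `m`-link path `v 0, ..., v m` under edge lengths `c`. -/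
def pathLen (c : ℕ → ℕ → ℝ) (m : ℕ) (v : ℕ → ℕ) : ℝ :=
  ∑ k ∈ Finset.range m, c (v k) (v (k + 1))

/-- The set of lengths of `m`-link `a`-`b` paths in the complete DAG on `{s,...,N}`. -/
def pathLens (s N a b m : ℕ) (c : ℕ → ℕ → ℝ) : Set ℝ :=
  {x | ∃ v, IsPath s N a b m v ∧ pathLen c m v = x}

/-- The set of link counts of shortest `s`-`n` paths in `G(lam)`
    (the graph with `lam` subtracted from every edge length). -/
def DSet (s N n : ℕ) (c : ℕ → ℕ → ℝ) (lam : ℝ) : Set ℕ :=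
  {m | ∃ v, IsPath s N s n m v ∧
    ∀ m' w, IsPath s N s n m' w →
      pathLen c m v - m * lam ≤ pathLen c m' w - m' * lam}

/-- The set of lengths of all `s`-`n` paths (any number of links). -/
def allLens (s N n : ℕ) (c : ℕ → ℕ → ℝ) : Set ℝ :=
  {x | ∃ m v, IsPath s N s n m v ∧ pathLen c m v = x}

lemma path_mono (m : ℕ) (v : ℕ → ℕ) (h : ∀ k < m, v k < v (k + 1)) :
    ∀ a b, a ≤ b → b ≤ m → v a ≤ v b := by
  intro a b hab hbm
  induction b, hab using Nat.le_induction with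
  | base => exact le_rfl
  | succ b hb ih => exact le_trans (ih (by omega)) (le_of_lt (h b (by omega)))

lemma pathLen_split (c : ℕ → ℕ → ℝ) (i m : ℕ) (h : i ≤ m) (v : ℕ → ℕ) :
    pathLen c m v = pathLen c i v + ∑ k ∈ Finset.Ico i m, c (v k) (v (k + 1)) := by
  unfold pathLen
  rw [Finset.range_eq_Ico, ← Finset.sum_Ico_consecutive _ (Nat.zero_le i) h]
  rw [Finset.range_eq_Ico]

/-- Nested intervals along a shortest `m`-link path: if `lam` admits a shortest
`s`-`v(i+1)` path with `i+1` links in `G(lam)`, then it admits a shortest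
`s`-`v i` path with `i` links, i.e. `Λ(i+1, v(i+1)) ⊆ Λ(i, v i)`. -/
theorem stmt13 (s N n m : ℕ) (c : ℕ → ℕ → ℝ) (hc : IsMonge s N c)
    (hn1 : s + 1 ≤ n) (hn2 : n ≤ N) (hm1 : 1 ≤ m) (hm2 : s + m ≤ n)
    (v : ℕ → ℕ) (hv : IsPath s N s n m v)
    (hopt : ∀ w, IsPath s N s n m w → pathLen c m v ≤ pathLen c m w) :
    ∀ i, 1 ≤ i → i < m → ∀ lam : ℝ,
      (i + 1) ∈ DSet s N (v (i + 1)) c lam → i ∈ DSet s N (v i) c lam := by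
  intro i hi1 him lam hmem
  obtain ⟨hv0, hvm, hvinc, hss, hnN⟩ := hv
  have hmono := path_mono m v hvinc
  have hviN : v i ≤ N := le_trans (le_trans (hmono i m (le_of_lt him) le_rfl) (le_of_eq hvm)) hn2
  have hvi1N : v (i + 1) ≤ N := le_trans (le_trans (hmono (i+1) m him le_rfl) (le_of_eq hvm)) hn2
  obtain ⟨p, hp, hpopt⟩ := hmem
  -- Step C: the prefix of v of length i+1 is optimal among (i+1)-link paths to v (i+1)
  have prefix_opt : ∀ u, IsPath s N s (v (i + 1)) (i + 1) u →
      pathLen c (i + 1) v ≤ pathLen c (i + 1) u := by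
    intro u hu
    obtain ⟨hu0, hu1, huinc, -, -⟩ := hu
    set w' : ℕ → ℕ := fun k => if k ≤ i + 1 then u k else v k with hw'
    have hw'u : ∀ k, k ≤ i + 1 → w' k = u k := by
      intro k hk; simp only [hw']; rw [if_pos hk]
    have hw'eq : ∀ k, i + 1 ≤ k → w' k = v k := by
      intro k hk
      rcases Nat.eq_or_lt_of_le hk with rfl | hk'
      · rw [hw'u _ le_rfl, hu1]
      · simp only [hw']; rw [if_neg (by omega)]
    have hw'path : IsPath s N s n m w' := by
      refine ⟨by rw [hw'u 0 (by omega), hu0], by rw [hw'eq m him]; exact hvm, ?_, le_rfl, hnN⟩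
      intro k hk
      rcases Nat.lt_or_ge k (i + 1) with hki | hki
      · rw [hw'u k (by omega), hw'u (k + 1) (by omega)]
        exact huinc k hki
      · rw [hw'eq k hki, hw'eq (k + 1) (by omega)]
        exact hvinc k hk
    have h3 := hopt w' hw'path
    rw [pathLen_split c (i + 1) m (by omega) v,
        pathLen_split c (i + 1) m (by omega) w'] at h3
    have h4 : pathLen c (i + 1) w' = pathLen c (i + 1) u := by
      unfold pathLen
      refine Finset.sum_congr rfl fun k hk => ?_
      have hk' : k < i + 1 := Finset.mem_range.mp hk
      rw [hw'u k (by omega), hw'u (k + 1) (by omega)]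
    have h5 : ∑ k ∈ Finset.Ico (i + 1) m, c (w' k) (w' (k + 1)) =
        ∑ k ∈ Finset.Ico (i + 1) m, c (v k) (v (k + 1)) := by
      refine Finset.sum_congr rfl fun k hk => ?_
      obtain ⟨hk1, hk2⟩ := Finset.mem_Ico.mp hk
      rw [hw'eq k hk1, hw'eq (k + 1) (by omega)]
    rw [h4, h5] at h3
    linarith
  -- v itself (truncated at i) is the witness
  refine ⟨v, ⟨hv0, rfl, fun k hk => hvinc k (by omega), le_rfl, hviN⟩, ?_⟩
  intro m' w hw
  obtain ⟨hw0, hwm, hwinc, -, -⟩ := hw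
  -- extend w by the edge (v i, v (i+1))
  set w' : ℕ → ℕ := fun k => if k ≤ m' then w k else v (i + 1) with hw'
  have hw'w : ∀ k, k ≤ m' → w' k = w k := by
    intro k hk; simp only [hw']; rw [if_pos hk]
  have hw'top : w' (m' + 1) = v (i + 1) := by
    simp only [hw']; rw [if_neg (by omega)]
  have hw'path : IsPath s N s (v (i + 1)) (m' + 1) w' := by
    refine ⟨by rw [hw'w 0 (by omega), hw0], hw'top, ?_, le_rfl, hvi1N⟩
    intro k hk
    rcases Nat.lt_or_ge k m' with hkm | hkm
    · rw [hw'w k (by omega), hw'w (k + 1) (by omega)]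
      exact hwinc k hkm
    · have hkm' : k = m' := by omega
      subst hkm'
      rw [hw'w _ le_rfl, hw'top, hwm]
      exact hvinc i him
  have hkey := hpopt (m' + 1) w' hw'path
  have hlen1 : pathLen c (i + 1) v = pathLen c i v + c (v i) (v (i + 1)) := by
    unfold pathLen; rw [Finset.sum_range_succ]
  have hlen2 : pathLen c (m' + 1) w' = pathLen c m' w + c (v i) (v (i + 1)) := by
    unfold pathLen
    rw [Finset.sum_range_succ]
    congr 1
    · refine Finset.sum_congr rfl fun k hk => ?_
      have hk' : k < m' := Finset.mem_range.mp hk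
      rw [hw'w k (by omega), hw'w (k + 1) (by omega)]
    · rw [hw'w _ le_rfl, hw'top, hwm]
  have hC : pathLen c (i + 1) v ≤ pathLen c (i + 1) p := prefix_opt p hp
  push_cast at hkey ⊢
  rw [hlen2] at hkey
  rw [hlen1] at hC
  linarith
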